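/- Let p = 3 and let k >= 0 and s >= 1 with a = s*3^k. Then (2^a - (-1)^a)/3^(k+1) is an integer congruent modulo 3 to s*(1+delta)/2 taken in Z/3, where delta = 1 if 2 divides s-1 and delta = 0 otherwise; more precisely, 2*(2^(s*3^k) - (-1)^s) / 3^(k+1) ≡ s*(1+delta) (mod 3). -/
import Mathlib

lemma two_pow_three_pow (k : ℕ) : ∃ t : ℤ, (2:ℤ) ^ (3^k) = -1 + 3^(k+1) * (1 + 3 * t) := by
  induction k with
  | zero => exact ⟨0, by norm_num⟩
  | succ k ih =>
    obtain ⟨t, ht⟩ := ih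
    refine ⟨t - 3^k*(1+3*t)^2 + 3^k*3^k*(1+3*t)^3, ?_⟩
    have : (2:ℤ) ^ (3^(k+1)) = ((2:ℤ)^(3^k))^3 := by
      rw [← pow_mul, pow_succ]
    rw [this, ht]
    ring

lemma binom_lem (c : ℤ) (s : ℕ) :
    ∃ t : ℤ, (-1 + c)^s = (-1)^s + s * (-1)^(s+1) * c + c^2 * t := by
  induction s with
  | zero => exact ⟨0, by norm_num⟩
  | succ s ih =>
    obtain ⟨t, ht⟩ := ih
    refine ⟨(s:ℤ) * (-1)^(s+1) - t + c * t, ?_⟩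
    have : (-1 + c)^(s+1) = (-1+c)^s * (-1+c) := by ring
    rw [this, ht]
    push_cast
    ring_nf



/-- The case `p = 3` of Carlitz's sharper congruence: `(2^(s 3^k) - (-1)^s)/3^(k+1)` is
an integer `E` with `2 E ≡ s (1 + δ) (mod 3)`, where `δ = 1` if `2 ∣ s - 1`, else `0`. -/
theorem carlitz_sharper_three (k s : ℕ) (hs : 0 < s) :
    ((3 : ℤ) ^ (k + 1) ∣ 2 ^ (s * 3 ^ k) - (-1 : ℤ) ^ s) ∧
    ∀ E : ℤ, (2 : ℤ) ^ (s * 3 ^ k) - (-1 : ℤ) ^ s = 3 ^ (k + 1) * E →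
      2 * E ≡ (s : ℤ) * (1 + (if 2 ∣ s - 1 then 1 else 0)) [ZMOD 3] := by
  obtain ⟨t, ht⟩ := two_pow_three_pow k
  obtain ⟨u, hu⟩ := binom_lem (3^(k+1) * (1 + 3*t)) s
  have hpow : (2:ℤ)^(s*3^k) = (-1 + 3^(k+1)*(1+3*t))^s := by
    rw [mul_comm s, pow_mul, ht]
  set X : ℤ := (s:ℤ) * (-1)^(s+1) * (1+3*t) + 3^(k+1) * (1+3*t)^2 * u with hX
  have key : (2:ℤ)^(s*3^k) - (-1)^s = 3^(k+1) * X := by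
    rw [hpow, hu, hX]; ring
  refine ⟨⟨X, key⟩, fun E hE => ?_⟩
  have h3 : ((3:ℤ)^(k+1)) ≠ 0 := by positivity
  have hEX : E = X := mul_left_cancel₀ h3 (by rw [← hE, key])
  rcases Nat.even_or_odd s with he | ho
  · have hδ : ¬ (2 ∣ s - 1) := by obtain ⟨j, hj⟩ := he; omega
    rw [if_neg hδ]
    have h1 : ((-1:ℤ))^(s+1) = -1 := (he.add_one).neg_one_pow
    refine Int.modEq_iff_dvd.mpr ⟨(s:ℤ) + 2*s*t - 2*3^k*(1+3*t)^2*u, ?_⟩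
    rw [hEX, hX, h1]; ring
  · have hδ : (2 ∣ s - 1) := by obtain ⟨j, hj⟩ := ho; omega
    rw [if_pos hδ]
    have h1 : ((-1:ℤ))^(s+1) = 1 := (ho.add_one).neg_one_pow
    refine Int.modEq_iff_dvd.mpr ⟨-2*s*t - 2*3^k*(1+3*t)^2*u, ?_⟩
    rw [hEX, hX, h1]; ring
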